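/- Let $I \subseteq \mathfrak{p}$ be an ideal and prime of a Noetherian ring $R$, and let $S$ be a multiplicatively closed subset of $R$ disjoint from $\mathfrak{p}$. Then $\mathfrak{p} \in \overline{Q^*}(I)$ if and only if $\mathfrak{p} R_S \in \overline{Q^*}(I R_S)$. -/

import Mathlib

open IsLocalRing

noncomputable section

/-- The completion of a local ring at its maximal ideal. -/
abbrev Cmpl (A : Type*) [CommRing A] [IsLocalRing A] : Type _ :=
  AdicCompletion (maximalIdeal A) A

variable (R : Type*) [CommRing R]

/-- `p` is a quintasymptotic prime of `I`: there is a minimal prime `z` of the completion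
`(R_p)^*` of the localization at `p` such that `Rad (I (R_p)^* + z) = p (R_p)^*`. -/
def IsQStar (I p : Ideal R) [p.IsPrime] : Prop :=
  I ≤ p ∧ ∃ z ∈ minimalPrimes (Cmpl (Localization.AtPrime p)),
    (Ideal.map (algebraMap (Localization.AtPrime p) (Cmpl (Localization.AtPrime p)))
        (Ideal.map (algebraMap R (Localization.AtPrime p)) I) ⊔ z).radical =
      Ideal.map (algebraMap (Localization.AtPrime p) (Cmpl (Localization.AtPrime p)))
        (maximalIdeal (Localization.AtPrime p))

/-- The set `Q̄*(I)` of quintasymptotic primes of `I`. -/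
def QStarSet (I : Ideal R) : Set (Ideal R) :=
  {p | ∃ h : p.IsPrime, letI := h; IsQStar R I p}

/-- `xs` is a quintasymptotic sequence over `I`. -/
def IsQASeq (I : Ideal R) (xs : List R) : Prop :=
  I ⊔ Ideal.span {a | a ∈ xs} ≠ ⊤ ∧
  ∀ i : Fin xs.length, ∀ p ∈ QStarSet R (I ⊔ Ideal.span {a | a ∈ xs.take i}), xs.get i ∉ p

/-- `xs` is a maximal quintasymptotic sequence over `I`. -/
def IsMaxQASeq (I : Ideal R) (xs : List R) : Prop :=
  IsQASeq R I xs ∧ ∀ y : R, ¬ IsQASeq R I (xs ++ [y])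

/-- The quintasymptotic cograde of an ideal of a local ring. -/
def qacogd [IsLocalRing R] (I : Ideal R) : WithBot ℕ∞ :=
  ⨅ z ∈ minimalPrimes (Cmpl R),
    ringKrullDim ((Cmpl R) ⧸ (Ideal.map (algebraMap R (Cmpl R)) I ⊔ z))

/-- The height of an ideal. -/
def idealHeight (I : Ideal R) : WithBot ℕ∞ :=
  ⨅ p, ⨅ h : p ∈ I.minimalPrimes,
    letI : p.IsPrime := h.1.1
    ringKrullDim (Localization.AtPrime p)

end

section TransferAux

open IsLocalRing AdicCompletion

namespace QStarAux

variable {A B : Type*} [CommRing A] [CommRing B]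

theorem smul_top_le_comap (e : A ≃+* B) {I : Ideal A} {J : Ideal B}
    (h : J = I.map (e : A →+* B)) (n : ℕ) :
    (I ^ n • ⊤ : Ideal A) ≤ (J ^ n • ⊤ : Ideal B).comap (e : A →+* B) := by
  have h1 : (I ^ n • ⊤ : Ideal A) = I ^ n := by ext x; simp
  have h2 : (J ^ n • ⊤ : Ideal B) = J ^ n := by ext x; simp
  rw [h1, h2, h, ← Ideal.map_pow]
  exact Ideal.le_comap_map

/-- The ring hom between adic completions induced by a ring equiv. -/
def cmplHom (e : A ≃+* B) {I : Ideal A} {J : Ideal B} (h : J = I.map (e : A →+* B)) :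
    AdicCompletion I A →+* AdicCompletion J B where
  toFun x := ⟨fun n =>
      Ideal.quotientMap (J ^ n • ⊤ : Ideal B) (e : A →+* B) (smul_top_le_comap e h n) (x.val n), by
    intro m n hmn
    obtain ⟨a, ha⟩ := Ideal.Quotient.mk_surjective (x.val n)
    have hm : x.val m = Ideal.Quotient.mk _ a := by
      rw [← x.property hmn, ← ha]; rfl
    show transitionMap J B hmn
        (Ideal.quotientMap (J ^ n • ⊤ : Ideal B) (e : A →+* B) (smul_top_le_comap e h n)
          (x.val n)) =
      Ideal.quotientMap (J ^ m • ⊤ : Ideal B) (e : A →+* B) (smul_top_le_comap e h m) (x.val m)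
    rw [← ha, hm, Ideal.quotientMap_mk, Ideal.quotientMap_mk, transitionMap_ideal_mk]⟩
  map_one' := Subtype.ext <| funext fun n => map_one _
  map_mul' x y := Subtype.ext <| funext fun n => map_mul _ _ _
  map_zero' := Subtype.ext <| funext fun n => map_zero _
  map_add' x y := Subtype.ext <| funext fun n => map_add _ _ _

theorem cmplHom_val (e : A ≃+* B) {I : Ideal A} {J : Ideal B} (h : J = I.map (e : A →+* B))
    (x : AdicCompletion I A) (n : ℕ) :
    (cmplHom e h x).val n =
      Ideal.quotientMap (J ^ n • ⊤ : Ideal B) (e : A →+* B) (smul_top_le_comap e h n) (x.val n) :=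
  rfl

theorem map_symm_of_map (e : A ≃+* B) {I : Ideal A} {J : Ideal B}
    (h : J = I.map (e : A →+* B)) : I = J.map (e.symm : B →+* A) := by
  rw [h, Ideal.map_of_equiv]

/-- The ring equiv between adic completions induced by a ring equiv. -/
noncomputable def cmplEquiv (e : A ≃+* B) {I : Ideal A} {J : Ideal B} (h : J = I.map (e : A →+* B)) :
    AdicCompletion I A ≃+* AdicCompletion J B :=
  RingEquiv.ofRingHom (cmplHom e h) (cmplHom e.symm (map_symm_of_map e h))
    (RingHom.ext fun x => Subtype.ext (funext fun n => by
      obtain ⟨a, ha⟩ := Ideal.Quotient.mk_surjective (x.val n)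
      show (cmplHom e h (cmplHom e.symm (map_symm_of_map e h) x)).val n = x.val n
      rw [cmplHom_val, cmplHom_val, ← ha, Ideal.quotientMap_mk, Ideal.quotientMap_mk]
      simp))
    (RingHom.ext fun x => Subtype.ext (funext fun n => by
      obtain ⟨a, ha⟩ := Ideal.Quotient.mk_surjective (x.val n)
      show (cmplHom e.symm (map_symm_of_map e h) (cmplHom e h x)).val n = x.val n
      rw [cmplHom_val, cmplHom_val, ← ha, Ideal.quotientMap_mk, Ideal.quotientMap_mk]
      simp))

theorem cmplEquiv_comp_algebraMap (e : A ≃+* B) {I : Ideal A} {J : Ideal B}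
    (h : J = I.map (e : A →+* B)) :
    ((cmplEquiv e h : AdicCompletion I A ≃+* AdicCompletion J B) : _ →+* _).comp
        (algebraMap A (AdicCompletion I A)) =
      (algebraMap B (AdicCompletion J B)).comp (e : A →+* B) := by
  refine RingHom.ext fun a => Subtype.ext (funext fun n => ?_)
  show Ideal.quotientMap (J ^ n • ⊤ : Ideal B) (e : A →+* B) (smul_top_le_comap e h n)
      (Ideal.Quotient.mk (I ^ n • ⊤ : Ideal A) a) =
    Ideal.Quotient.mk (J ^ n • ⊤ : Ideal B) ((e : A →+* B) a)
  rw [Ideal.quotientMap_mk]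

end QStarAux

namespace QStarAux2
open QStarAux

variable {A B : Type*} [CommRing A] [CommRing B] [IsLocalRing A] [IsLocalRing B]

theorem map_maximalIdeal (e : A ≃+* B) :
    (maximalIdeal A).map (e : A →+* B) = maximalIdeal B := by
  ext x
  rw [Ideal.map_comap_of_equiv, Ideal.mem_comap]
  simp only [IsLocalRing.mem_maximalIdeal, mem_nonunits_iff]
  constructor
  · intro hx hu
    exact hx (by simpa using hu.map e.symm.toRingHom)
  · intro hx hu
    exact hx (by simpa using hu.map e.toRingHom)

theorem exists_min_transfer {C D : Type*} [CommRing C] [CommRing D] (F : C ≃+* D)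
    {c1 c2 : Ideal C} {d1 d2 : Ideal D} (h1 : d1 = c1.map (F : C →+* D))
    (h2 : d2 = c2.map (F : C →+* D))
    (h : ∃ z ∈ minimalPrimes C, (c1 ⊔ z).radical = c2) :
    ∃ z ∈ minimalPrimes D, (d1 ⊔ z).radical = d2 := by
  obtain ⟨z, hz, hrad⟩ := h
  refine ⟨z.map (F : C →+* D), ?_, ?_⟩
  · rw [Ideal.map_comap_of_equiv F]
    have hb : (⊥ : Ideal C).comap (F.symm : D →+* C) = ⊥ :=
      Ideal.comap_bot_of_injective _ F.symm.injective
    have hm := Ideal.minimal_primes_comap_of_surjective (f := (F.symm : D →+* C))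
      (show Function.Surjective (F.symm : D →+* C) from F.symm.surjective) (I := ⊥) (J := z) hz
    rw [hb] at hm
    exact hm
  · have := congrArg (Ideal.map (F : C →+* D)) hrad
    rwa [Ideal.map_radical_of_surjective F.surjective (by simp [RingHom.ker_coe_equiv]),
      Ideal.map_sup, ← h1, ← h2] at this

theorem cond_of_equiv (e : A ≃+* B) {K : Ideal A} {K' : Ideal B}
    (hK : K' = K.map (e : A →+* B))
    (h : ∃ z ∈ minimalPrimes (AdicCompletion (maximalIdeal A) A),
      (Ideal.map (algebraMap A (AdicCompletion (maximalIdeal A) A)) K ⊔ z).radical =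
        Ideal.map (algebraMap A (AdicCompletion (maximalIdeal A) A)) (maximalIdeal A)) :
    ∃ z ∈ minimalPrimes (AdicCompletion (maximalIdeal B) B),
      (Ideal.map (algebraMap B (AdicCompletion (maximalIdeal B) B)) K' ⊔ z).radical =
        Ideal.map (algebraMap B (AdicCompletion (maximalIdeal B) B)) (maximalIdeal B) := by
  have hcomp : ((cmplEquiv e (map_maximalIdeal e).symm :
        AdicCompletion (maximalIdeal A) A ≃+* AdicCompletion (maximalIdeal B) B) :
          AdicCompletion (maximalIdeal A) A →+* AdicCompletion (maximalIdeal B) B).comp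
        (algebraMap A (AdicCompletion (maximalIdeal A) A)) =
      (algebraMap B (AdicCompletion (maximalIdeal B) B)).comp (e : A →+* B) :=
    cmplEquiv_comp_algebraMap e (map_maximalIdeal e).symm
  refine exists_min_transfer (cmplEquiv e (map_maximalIdeal e).symm) ?_ ?_ h
  · rw [Ideal.map_map, hcomp, ← Ideal.map_map, hK]
  · rw [Ideal.map_map, hcomp, ← Ideal.map_map, map_maximalIdeal e]

end QStarAux2


/-- `p ∈ Q̄*(I)` iff `p R_S ∈ Q̄*(I R_S)` for `S` disjoint from `p`. -/
theorem mem_QStarSet_iff_localization (R : Type*) [CommRing R] [IsNoetherianRing R]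
    (I p : Ideal R) [p.IsPrime] (hIp : I ≤ p) (S : Submonoid R)
    (hS : Disjoint (S : Set R) (p : Set R)) :
    p ∈ QStarSet R I ↔
      Ideal.map (algebraMap R (Localization S)) p ∈
        QStarSet (Localization S) (Ideal.map (algebraMap R (Localization S)) I) := by
  classical
  have hpp : p.IsPrime := inferInstance
  set f := algebraMap R (Localization S) with hf
  have hq : (p.map f).IsPrime :=
    IsLocalization.isPrime_of_isPrime_disjoint S (Localization S) p hpp hS
  haveI := hq
  have hcomap : (p.map f).comap f = p :=
    IsLocalization.under_map_of_isPrime_disjoint S (Localization S) hpp hS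
  haveI hloc : IsLocalization.AtPrime (Localization.AtPrime (p.map f)) p := by
    have hpc : ((p.map f).comap f).primeCompl = p.primeCompl := by
      ext x
      simp only [Ideal.primeCompl, Submonoid.mem_mk, Subsemigroup.mem_mk, Set.mem_compl_iff,
        SetLike.mem_coe, hcomap]
    have := IsLocalization.isLocalization_atPrime_localization_atPrime S (p.map f)
    unfold IsLocalization.AtPrime at this ⊢
    rwa [hpc] at this
  let e : Localization.AtPrime p ≃ₐ[R] Localization.AtPrime (p.map f) :=
    IsLocalization.algEquiv p.primeCompl _ _
  have hcomp1 : ((e : Localization.AtPrime p ≃+* Localization.AtPrime (p.map f)) :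
        Localization.AtPrime p →+* Localization.AtPrime (p.map f)).comp
        (algebraMap R (Localization.AtPrime p)) =
      algebraMap R (Localization.AtPrime (p.map f)) :=
    RingHom.ext fun r => e.commutes r
  have hKmap : (Ideal.map (algebraMap R (Localization.AtPrime p)) I).map
        ((e : Localization.AtPrime p ≃+* Localization.AtPrime (p.map f)) :
          Localization.AtPrime p →+* Localization.AtPrime (p.map f)) =
      Ideal.map (algebraMap (Localization S) (Localization.AtPrime (p.map f))) (I.map f) := by
    rw [Ideal.map_map, hcomp1,
      IsScalarTower.algebraMap_eq R (Localization S) (Localization.AtPrime (p.map f)),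
      ← Ideal.map_map]
  constructor
  · rintro ⟨hp', hle, hcond⟩
    exact ⟨hq, Ideal.map_mono hIp,
      QStarAux2.cond_of_equiv
        (e : Localization.AtPrime p ≃+* Localization.AtPrime (p.map f)) hKmap.symm hcond⟩
  · rintro ⟨hq', hle, hcond⟩
    refine ⟨hpp, hIp, ?_⟩
    refine QStarAux2.cond_of_equiv
      (e : Localization.AtPrime p ≃+* Localization.AtPrime (p.map f)).symm ?_ hcond
    rw [← hKmap, Ideal.map_of_equiv]


end TransferAux
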